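/- For λ = (x_1, …, x_n) ∈ ℤ^n, the element w_λ lies in the subgroup Br_aff of Br_extg generated by {f_i : i ∈ ℤ/nℤ} if and only if x_1 + x_2 + ⋯ + x_n = 0. -/

import Mathlib

/-- Generators of the cylindrical braid group: `f i` for `i ∈ ℤ/nℤ`, and `ω`. -/
inductive ExtGen (n : ℕ) : Type
  | f : ZMod n → ExtGen n
  | om : ExtGen n

open FreeGroup in
/-- The defining relations of the cylindrical braid group `Br_extg`:
`f_i f_{i+1} f_i = f_{i+1} f_i f_{i+1}` (imposed only when `n ≥ 3`),
`f_i f_j = f_j f_i` for `j ∉ {i−1, i, i+1}`, and `ω f_i ω⁻¹ = f_{i+1}`. -/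
def extRels (n : ℕ) : Set (FreeGroup (ExtGen n)) :=
  {r | (∃ i : ZMod n, 3 ≤ n ∧
          r = of (ExtGen.f i) * of (ExtGen.f (i + 1)) * of (ExtGen.f i) *
              (of (ExtGen.f (i + 1)) * of (ExtGen.f i) * of (ExtGen.f (i + 1)))⁻¹) ∨
       (∃ i j : ZMod n, j ≠ i - 1 ∧ j ≠ i ∧ j ≠ i + 1 ∧
          r = of (ExtGen.f i) * of (ExtGen.f j) * (of (ExtGen.f j) * of (ExtGen.f i))⁻¹) ∨
       (∃ i : ZMod n,
          r = of ExtGen.om * of (ExtGen.f i) * (of ExtGen.om)⁻¹ * (of (ExtGen.f (i + 1)))⁻¹)}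

/-- The cylindrical braid group `Br_extg`. -/
abbrev BrExt (n : ℕ) : Type := PresentedGroup (extRels n)

/-- The generator `f_i` of `Br_extg`. -/
def fB (n : ℕ) (i : ZMod n) : BrExt n := PresentedGroup.of (ExtGen.f i)

/-- The generator `ω` of `Br_extg`. -/
def omB (n : ℕ) : BrExt n := PresentedGroup.of ExtGen.om

/-- `y_i = f_{i−1}⁻¹ ⋯ f_2⁻¹ f_1⁻¹ · ω · f_{n−1} f_{n−2} ⋯ f_{i+1} f_i`, for `1 ≤ i ≤ n`. -/
def yB (n : ℕ) (i : ℕ) : BrExt n :=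
  (((List.range (i - 1)).reverse.map (fun k => (fB n ((k + 1 : ℕ) : ZMod n))⁻¹)).prod)
    * omB n *
  (((List.range (n - i)).map (fun k => fB n ((n - 1 - k : ℕ) : ZMod n))).prod)

/-- `w_λ = y_1^{x_1} y_2^{x_2} ⋯ y_n^{x_n}` for `λ = (x_1, …, x_n) ∈ ℤ^n`. -/
def wB (n : ℕ) (lam : Fin n → ℤ) : BrExt n :=
  (List.ofFn (fun k : Fin n => yB n ((k : ℕ) + 1) ^ lam k)).prod

/-- ω f_i ω⁻¹ = f_{i+1} in `Br_extg`. -/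
lemma conj_fB (n : ℕ) (i : ZMod n) : omB n * fB n i * (omB n)⁻¹ = fB n (i + 1) := by
  have hmem : (FreeGroup.of (ExtGen.om) * FreeGroup.of (ExtGen.f i) *
      (FreeGroup.of (ExtGen.om : ExtGen n))⁻¹ * (FreeGroup.of (ExtGen.f (i + 1)))⁻¹) ∈
      Subgroup.normalClosure (extRels n) :=
    Subgroup.subset_normalClosure (Or.inr (Or.inr ⟨i, rfl⟩))
  have h1 : omB n * fB n i * (omB n)⁻¹ * (fB n (i + 1))⁻¹ = 1 :=
    (QuotientGroup.eq_one_iff _).2 hmem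
  exact mul_inv_eq_one.mp h1

/-- The "winding number" homomorphism `Br_extg → ℤ`. -/
noncomputable def windB (n : ℕ) : BrExt n →* Multiplicative ℤ :=
  PresentedGroup.toGroup (f := fun x => match x with
    | ExtGen.f _ => 1
    | ExtGen.om => Multiplicative.ofAdd 1)
    (by
      rintro r (⟨i, _, rfl⟩ | ⟨i, j, _, _, _, rfl⟩ | ⟨i, rfl⟩) <;> simp)

lemma windB_fB (n : ℕ) (i : ZMod n) : windB n (fB n i) = 1 := by
  simp [windB, fB]

lemma windB_omB (n : ℕ) : windB n (omB n) = Multiplicative.ofAdd 1 := by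
  simp [windB, omB]

lemma normal_aff (n : ℕ) : (Subgroup.closure (Set.range (fB n))).Normal := by
  set N := Subgroup.closure (Set.range (fB n)) with hN
  rw [← Subgroup.normalizer_eq_top_iff, eq_top_iff, ← PresentedGroup.closure_range_of (extRels n),
    Subgroup.closure_le]
  rintro _ ⟨x, rfl⟩
  cases x with
  | f i => exact Subgroup.le_normalizer (Subgroup.subset_closure ⟨i, rfl⟩)
  | om =>
    have himg : (MulAut.conj (omB n)).toMonoidHom '' (Set.range (fB n)) = Set.range (fB n) := by
      ext a
      simp only [Set.mem_image, Set.mem_range]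
      constructor
      · rintro ⟨_, ⟨i, rfl⟩, rfl⟩
        exact ⟨i + 1, (conj_fB n i).symm⟩
      · rintro ⟨j, rfl⟩
        refine ⟨fB n (j - 1), ⟨j - 1, rfl⟩, ?_⟩
        have := conj_fB n (j - 1)
        simpa using this
    have hmap : Subgroup.map (MulAut.conj (omB n)).toMonoidHom N = N := by
      rw [hN, MonoidHom.map_closure, himg]
    rw [SetLike.mem_coe, Subgroup.mem_normalizer_iff]
    intro h
    constructor
    · intro hh
      have : (MulAut.conj (omB n)).toMonoidHom h ∈ Subgroup.map (MulAut.conj (omB n)).toMonoidHom N :=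
        Subgroup.mem_map_of_mem _ hh
      rw [hmap] at this
      simpa [MulAut.conj, omB] using this
    · intro hh
      have h2 : (MulAut.conj (omB n)).toMonoidHom h ∈ N := by
        simpa [MulAut.conj, omB] using hh
      rw [← hmap] at h2
      obtain ⟨y, hy, hyh⟩ := h2
      have : y = h := (MulAut.conj (omB n)).injective hyh
      exact this ▸ hy

theorem statement_10 (n : ℕ) (hn : 2 ≤ n) (lam : Fin n → ℤ) :
    wB n lam ∈ Subgroup.closure (Set.range (fB n)) ↔ (∑ i : Fin n, lam i) = 0 := by
  set N := Subgroup.closure (Set.range (fB n)) with hN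
  haveI : N.Normal := normal_aff n
  set π := QuotientGroup.mk' N with hπ
  have hπf : ∀ i : ZMod n, π (fB n i) = 1 := fun i =>
    (QuotientGroup.eq_one_iff _).2 (Subgroup.subset_closure ⟨i, rfl⟩)
  have hπy : ∀ i : ℕ, π (yB n i) = π (omB n) := by
    intro i
    rw [yB, map_mul, map_mul]
    have h1 : π (((List.range (i - 1)).reverse.map
        (fun k => (fB n ((k + 1 : ℕ) : ZMod n))⁻¹)).prod) = 1 := by
      rw [map_list_prod, List.map_map]
      apply List.prod_eq_one
      intro x hx
      simp only [List.mem_map] at hx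
      obtain ⟨k, _, rfl⟩ := hx
      simp [hπf]
    have h2 : π (((List.range (n - i)).map (fun k => fB n ((n - 1 - k : ℕ) : ZMod n))).prod) = 1 := by
      rw [map_list_prod, List.map_map]
      apply List.prod_eq_one
      intro x hx
      simp only [List.mem_map] at hx
      obtain ⟨k, _, rfl⟩ := hx
      simp [hπf]
    rw [h1, h2, one_mul, mul_one]
  have hπw : π (wB n lam) = (π (omB n)) ^ (∑ i : Fin n, lam i) := by
    rw [wB, map_list_prod, List.map_ofFn]
    have : ∀ k : Fin n, (π ∘ fun k : Fin n => yB n ((k : ℕ) + 1) ^ lam k) k =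
        (zpowersHom _ (π (omB n))) (Multiplicative.ofAdd (lam k)) := by
      intro k
      simp [map_zpow, hπy, zpowersHom_apply]
    rw [funext this]
    have : List.ofFn (fun k : Fin n => (zpowersHom _ (π (omB n))) (Multiplicative.ofAdd (lam k)))
        = List.map (zpowersHom _ (π (omB n))) (List.ofFn (fun k => Multiplicative.ofAdd (lam k))) := by
      rw [List.map_ofFn]
      rfl
    rw [this, ← map_list_prod, List.prod_ofFn, ← ofAdd_sum, zpowersHom_apply]
    rfl
  have key : wB n lam ∈ N ↔ (π (omB n)) ^ (∑ i : Fin n, lam i) = 1 := by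
    rw [← hπw]
    exact ((QuotientGroup.eq_one_iff _).symm)
  rw [key]
  constructor
  · intro h
    have hom : (omB n) ^ (∑ i : Fin n, lam i) ∈ N := by
      have := (QuotientGroup.eq_one_iff ((omB n) ^ (∑ i : Fin n, lam i))).1 (by
        rw [← h]; simp [hπ])
      exact this
    have hker : N ≤ (windB n).ker := by
      rw [hN, Subgroup.closure_le]
      rintro _ ⟨i, rfl⟩
      exact windB_fB n i
    have := hker hom
    rw [MonoidHom.mem_ker, map_zpow, windB_omB] at this
    have h2 : Multiplicative.ofAdd (∑ i : Fin n, lam i) = 1 := by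
      rw [← this]
      simp [← ofAdd_zsmul]
    exact (Multiplicative.ofAdd).injective (by simpa using h2)
  · intro h
    rw [h, zpow_zero]
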